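/- Let R be a commutative ring and u, v ∈ R with u·(u+v) = 0 and v·(u+v) = 0. Let f ∈ R[X] be a polynomial with zero constant term. Then for every integer i ≥ 0, (f(u))^(i+1) = f(u) · (f(-v))^i. -/
import Mathlib

theorem stmt_1 {R : Type*} [CommRing R] (u v : R)
    (hu : u * (u + v) = 0) (hv : v * (u + v) = 0)
    (f : Polynomial R) (hf : f.coeff 0 = 0) (i : ℕ) :
    (f.eval u) ^ (i + 1) = f.eval u * (f.eval (-v)) ^ i := by
  have huu : u * u = u * (-v) := by
    have : u * u + u * v = 0 := by rw [← mul_add]; exact hu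
    linear_combination this
  have hpow : ∀ n : ℕ, u * u ^ (n + 1) = u * (-v) ^ (n + 1) := by
    intro n
    induction n with
    | zero => simpa using huu
    | succ k ih =>
      calc u * u ^ (k + 2) = (u * u) * u ^ (k + 1) := by ring
        _ = (u * (-v)) * u ^ (k + 1) := by rw [huu]
        _ = (-v) * (u * u ^ (k + 1)) := by ring
        _ = (-v) * (u * (-v) ^ (k + 1)) := by rw [ih]
        _ = u * (-v) ^ (k + 2) := by ring
  have key : u * f.eval u = u * f.eval (-v) := by
    rw [f.eval_eq_sum_range, f.eval_eq_sum_range, Finset.mul_sum, Finset.mul_sum]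
    apply Finset.sum_congr rfl
    intro n _
    cases n with
    | zero => simp [hf]
    | succ k =>
      linear_combination f.coeff (k+1) * hpow k
  have hfu : f.eval u = f.divX.eval u * u := by
    conv_lhs => rw [← f.divX_mul_X_add, hf]
    simp
  have sq : f.eval u * f.eval u = f.eval u * f.eval (-v) := by
    calc f.eval u * f.eval u = f.divX.eval u * (u * f.eval u) := by rw [hfu]; ring
      _ = f.divX.eval u * (u * f.eval (-v)) := by rw [key]
      _ = f.eval u * f.eval (-v) := by rw [hfu]; ring
  induction i with
  | zero => simp
  | succ k ih =>
    calc f.eval u ^ (k + 2) = f.eval u ^ (k + 1) * f.eval u := by ring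
      _ = f.eval u * f.eval (-v) ^ k * f.eval u := by rw [ih]
      _ = (f.eval u * f.eval u) * f.eval (-v) ^ k := by ring
      _ = (f.eval u * f.eval (-v)) * f.eval (-v) ^ k := by rw [sq]
      _ = f.eval u * f.eval (-v) ^ (k + 1) := by ring
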